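/- Let D̃ : S×A → ℝ satisfy 0 < D̃(s,a) ≤ 1 for all (s,a), and suppose |R(s,a)| ≤ 1 for all (s,a). Then for every Q : S×A → ℝ and every y = (s0,a0,s1) ∈ S×A×S, the operator F satisfies p_span(F(Q,D̃,y)) ≤ (2/D̃(s0,a0))·(p_span(Q) + 1). -/

import Mathlib

/-- The span seminorm of a vector over a finite nonempty index set:
`p_span(x) = (max_i x_i - min_i x_i) / 2`. -/
noncomputable def pspan {I : Type*} [Fintype I] [Nonempty I] (x : I → ℝ) : ℝ :=
  ((⨆ i, x i) - ⨅ i, x i) / 2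

/-- The importance-sampling corrected sample operator `F`: for `y = (s0, a0, s1)`,
`[F(Q,D̃,y)](s,a) = (1{(s0,a0)=(s,a)}/D̃(s,a))·(R(s0,a0) + max_{a'} Q(s1,a') - Q(s0,a0)) + Q(s,a)`. -/
noncomputable def Fop {S A : Type*} [Nonempty A] [DecidableEq S] [DecidableEq A]
    (R : S × A → ℝ) (Q : S × A → ℝ) (Dt : S × A → ℝ) (y : S × A × S) : S × A → ℝ :=
  fun sa =>
    ((if (y.1, y.2.1) = sa then (1 : ℝ) else 0) / Dt sa) *
        (R (y.1, y.2.1) + (⨆ a' : A, Q (y.2.2, a')) - Q (y.1, y.2.1))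
      + Q sa

lemma pspan_nonneg {I : Type*} [Fintype I] [Nonempty I] (x : I → ℝ) : 0 ≤ pspan x := by
  have h : (⨅ i, x i) ≤ ⨆ i, x i := by
    obtain ⟨i⟩ := ‹Nonempty I›
    exact le_trans (ciInf_le (Set.finite_range x).bddBelow i)
      (le_ciSup (Set.finite_range x).bddAbove i)
  unfold pspan; linarith

lemma pspan_le {I : Type*} [Fintype I] [Nonempty I] (x : I → ℝ) (m M : ℝ)
    (hm : ∀ i, m ≤ x i) (hM : ∀ i, x i ≤ M) : pspan x ≤ (M - m) / 2 := by
  have h1 : (⨆ i, x i) ≤ M := ciSup_le hM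
  have h2 : m ≤ ⨅ i, x i := le_ciInf hm
  unfold pspan; linarith

lemma pspan_add {I : Type*} [Fintype I] [Nonempty I] (x y : I → ℝ) :
    pspan (fun i => x i + y i) ≤ pspan x + pspan y := by
  have h1 : (⨆ i, x i + y i) ≤ (⨆ i, x i) + ⨆ i, y i :=
    ciSup_le fun i => add_le_add (le_ciSup (Set.finite_range x).bddAbove i)
      (le_ciSup (Set.finite_range y).bddAbove i)
  have h2 : (⨅ i, x i) + (⨅ i, y i) ≤ ⨅ i, x i + y i :=
    le_ciInf fun i => add_le_add (ciInf_le (Set.finite_range x).bddBelow i)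
      (ciInf_le (Set.finite_range y).bddBelow i)
  unfold pspan; linarith

/-- At-most-affine growth of `F` in the span seminorm: for `0 < D̃ ≤ 1` and `|R| ≤ 1`,
`p_span(F(Q,D̃,y)) ≤ (2/D̃(s0,a0))·(p_span(Q) + 1)`. -/
theorem Fop_growth {S A : Type*} [Fintype S] [Fintype A] [Nonempty S] [Nonempty A]
    [DecidableEq S] [DecidableEq A] (R : S × A → ℝ) (hR : ∀ sa, |R sa| ≤ 1)
    (Dt : S × A → ℝ) (hD0 : ∀ sa, 0 < Dt sa) (hD1 : ∀ sa, Dt sa ≤ 1) :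
    ∀ (Q : S × A → ℝ) (y : S × A × S),
      pspan (Fop (A := A) R Q Dt y) ≤ (2 / Dt (y.1, y.2.1)) * (pspan Q + 1) := by
  intro Q y
  obtain ⟨s0, a0, s1⟩ := y
  simp only
  set d := Dt (s0, a0) with hd
  have hd0 : 0 < d := hD0 _
  have hd1 : d ≤ 1 := hD1 _
  set δ := R (s0, a0) + (⨆ a' : A, Q (s1, a')) - Q (s0, a0) with hδ
  set p := pspan Q with hp
  have hp0 : 0 ≤ p := pspan_nonneg Q
  have hsup : (⨆ a' : A, Q (s1, a')) ≤ ⨆ sa, Q sa :=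
    ciSup_le fun a' => le_ciSup (Set.finite_range Q).bddAbove (s1, a')
  have hinf : (⨅ sa, Q sa) ≤ Q (s0, a0) := ciInf_le (Set.finite_range Q).bddBelow _
  have hsup2 : Q (s0, a0) ≤ ⨆ sa, Q sa := le_ciSup (Set.finite_range Q).bddAbove _
  have hinf2 : (⨅ sa, Q sa) ≤ ⨆ a' : A, Q (s1, a') := by
    obtain ⟨a⟩ := ‹Nonempty A›
    exact le_trans (ciInf_le (Set.finite_range Q).bddBelow (s1, a))
      (le_ciSup (Set.finite_range (fun a' => Q (s1, a'))).bddAbove a)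
  have hR' := abs_le.mp (hR (s0, a0))
  have hspan : (⨆ sa, Q sa) - (⨅ sa, Q sa) = 2 * p := by
    rw [hp]; unfold pspan; ring
  have hδbd : |δ| ≤ 2 * p + 1 := by
    rw [abs_le]
    constructor <;> rw [hδ] <;> linarith [hR'.1, hR'.2]
  -- decompose Fop
  have heq : Fop (A := A) R Q Dt (s0, a0, s1)
      = fun sa => ((if (s0, a0) = sa then (1 : ℝ) else 0) / Dt sa) * δ + Q sa := rfl
  have hg : pspan (fun sa => ((if (s0, a0) = sa then (1 : ℝ) else 0) / Dt sa) * δ)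
      ≤ |δ| / d / 2 := by
    have h := pspan_le (fun sa => ((if (s0, a0) = sa then (1 : ℝ) else 0) / Dt sa) * δ)
      (min 0 (δ / d)) (max 0 (δ / d)) ?_ ?_
    · refine le_trans h ?_
      have : max 0 (δ / d) - min 0 (δ / d) = |δ / d| := by
        rw [max_sub_min_eq_abs]
        simp [abs_sub_comm]
      rw [this, abs_div, abs_of_pos hd0]
    · intro sa
      by_cases hcase : (s0, a0) = sa
      · subst hcase
        simp only
        rw [if_true, ← hd, one_div_mul_eq_div]
        exact min_le_right _ _
      · simp [hcase]
    · intro sa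
      by_cases hcase : (s0, a0) = sa
      · subst hcase
        simp only
        rw [if_true, ← hd, one_div_mul_eq_div]
        exact le_max_right _ _
      · simp [hcase]
  have hmain : pspan (Fop (A := A) R Q Dt (s0, a0, s1)) ≤ p + |δ| / d / 2 := by
    rw [heq]
    calc pspan (fun sa => ((if (s0, a0) = sa then (1 : ℝ) else 0) / Dt sa) * δ + Q sa)
        ≤ pspan (fun sa => ((if (s0, a0) = sa then (1 : ℝ) else 0) / Dt sa) * δ) + pspan Q :=
          pspan_add _ _
      _ ≤ p + |δ| / d / 2 := by rw [← hp]; linarith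
  refine le_trans hmain ?_
  have habs : |δ| / d / 2 ≤ (2 * p + 1) / d / 2 := by
    gcongr
  have step : p + |δ| / d / 2 ≤ p + (2 * p + 1) / d / 2 := by linarith
  refine le_trans step ?_
  show p + (2 * p + 1) / d / 2 ≤ 2 / d * (p + 1)
  rw [div_mul_eq_mul_div, le_div_iff₀ hd0]
  have e : (2 * p + 1) / d / 2 * d = (2 * p + 1) / 2 := by field_simp
  have expand : (p + (2 * p + 1) / d / 2) * d = p * d + (2 * p + 1) / d / 2 * d := by ring
  have pd : p * d ≤ p := mul_le_of_le_one_right hp0 hd1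
  rw [expand, e]
  linarith
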